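/- Let p ≥ 11 be a prime with p ≡ 3 (mod 4). For even k with 4 ≤ k ≤ p−5 set A_k = C(p,k)·i^k·S_{p−k}·S_k + C(p,k+1)·i^{k+1}·S_{p−k−1}·S_{k+1}, where S_r = ∑_{t=1}^{p-1} t^r. Then A_k ≡ (p³/2)·(p−k)·C(p,k)·i^k·(1+i)·B_k·B_{p−k−1} (mod p⁶) in ℤ_(p)[i], and the pairing k ↦ p−1−k gives A_{p−1−k} ≡ −A_k (mod p⁶); consequently ∑_{k even, 4 ≤ k ≤ p−5} A_k ≡ 0 (mod p⁶). -/

import Mathlib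

noncomputable section

/-- `i` in the Gaussian integers. -/
def Ig : GaussianInt := ⟨0, 1⟩

/-- Classical power sum `S_r(N) = ∑_{t=1}^N t^r`. -/
def Sps (r N : ℕ) : ℤ := ∑ t ∈ Finset.Icc 1 N, (t : ℤ) ^ r

/-- Gaussian power sum `F_n(k,m) = ∑_{a=1}^k ∑_{b=1}^m (a+bi)^n`. -/
def Fg (n k m : ℕ) : GaussianInt :=
  ∑ a ∈ Finset.Icc 1 k, ∑ b ∈ Finset.Icc 1 m, ((a : GaussianInt) + (b : GaussianInt) * Ig) ^ n

/-- Square Gaussian power sum `G_n(N) = F_n(N-1,N-1)`. -/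
def Gg (n N : ℕ) : GaussianInt := Fg n (N - 1) (N - 1)

/-- The paired bulk term
`A_k = C(p,k) i^k S_{p-k} S_k + C(p,k+1) i^{k+1} S_{p-k-1} S_{k+1}` in ℤ[i]. -/
def Ak (p k : ℕ) : GaussianInt :=
  (p.choose k : GaussianInt) * Ig ^ k * (Sps (p - k) (p - 1) : GaussianInt) * (Sps k (p - 1) : GaussianInt) +
  (p.choose (k + 1) : GaussianInt) * Ig ^ (k + 1) * (Sps (p - k - 1) (p - 1) : GaussianInt) *
    (Sps (k + 1) (p - 1) : GaussianInt)

namespace S19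

open Finset

variable {p : ℕ} [hp : Fact p.Prime]

/-- The main-term target for the congruence. -/
def Tgt (p : ℕ) [Fact p.Prime] (k : ℕ) : ℚ_[p] :=
  (p : ℚ_[p]) ^ 3 / 2 * ((p : ℚ_[p]) - (k : ℚ_[p])) * (p.choose k : ℚ_[p]) *
    (-1 : ℚ_[p]) ^ (k / 2) * ((bernoulli k : ℚ) : ℚ_[p]) * ((bernoulli (p - k - 1) : ℚ) : ℚ_[p])

lemma pR1 : (1:ℝ) < (p:ℝ) := by exact_mod_cast hp.out.one_lt

lemma ppos : (0:ℝ) < (p:ℝ) := by exact_mod_cast hp.out.pos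

lemma pnn (m : ℤ) : (0:ℝ) < (p:ℝ) ^ m := by
  have : (0:ℝ) < (p:ℝ) := lt_trans one_pos pR1
  positivity

lemma pmono {a b : ℤ} (h : a ≤ b) : (p:ℝ) ^ (-b) ≤ (p:ℝ) ^ (-a) := by
  apply zpow_le_zpow_right₀ (le_of_lt pR1); omega

lemma bmul {x y : ℚ_[p]} {a b : ℤ} (hx : ‖x‖ ≤ (p:ℝ) ^ (-a)) (hy : ‖y‖ ≤ (p:ℝ) ^ (-b)) :
    ‖x * y‖ ≤ (p:ℝ) ^ (-(a+b)) := by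
  rw [norm_mul]
  calc ‖x‖ * ‖y‖ ≤ (p:ℝ)^(-a) * (p:ℝ)^(-b) :=
        mul_le_mul hx hy (norm_nonneg _) (le_of_lt (pnn _))
    _ = (p:ℝ) ^ (-(a+b)) := by
        rw [← zpow_add₀ (by exact ne_of_gt (lt_trans one_pos pR1))]; ring_nf

lemma badd {x y : ℚ_[p]} {c : ℝ} (hx : ‖x‖ ≤ c) (hy : ‖y‖ ≤ c) : ‖x + y‖ ≤ c :=
  (Padic.nonarchimedean x y).trans (max_le hx hy)

lemma bsub {x y : ℚ_[p]} {c : ℝ} (hx : ‖x‖ ≤ c) (hy : ‖y‖ ≤ c) : ‖x - y‖ ≤ c := by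
  rw [sub_eq_add_neg]; exact badd hx (by rwa [norm_neg])

lemma bnat (n : ℕ) : ‖(n : ℚ_[p])‖ ≤ 1 := by
  have := Padic.norm_int_le_one (p := p) (n : ℤ); push_cast at this; exact this

lemma bunit {n : ℕ} (h0 : 0 < n) (h1 : n < p) : ‖(n : ℚ_[p])‖ = 1 := by
  refine le_antisymm (bnat n) ?_
  by_contra h; push_neg at h
  have h2 : ‖((n : ℤ) : ℚ_[p])‖ < 1 := by push_cast; exact h
  have := (Padic.norm_intCast_lt_one_iff (k := (n:ℤ))).1 h2
  have : p ∣ n := by exact_mod_cast this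
  exact absurd (Nat.le_of_dvd h0 this) (by omega)

lemma bmul1 {x y : ℚ_[p]} {c : ℝ} (hx : ‖x‖ ≤ 1) (hy : ‖y‖ ≤ c) (hc : 0 ≤ c) : ‖x * y‖ ≤ c := by
  rw [norm_mul]
  calc ‖x‖ * ‖y‖ ≤ 1 * c := mul_le_mul hx hy (norm_nonneg _) zero_le_one
    _ = c := one_mul c

lemma numul {n : ℕ} (h0 : 0 < n) (h1 : n < p) (x : ℚ_[p]) : ‖(n:ℚ_[p]) * x‖ = ‖x‖ := by
  rw [norm_mul, bunit h0 h1, one_mul]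

lemma norm2 (x : ℚ_[p]) (hodd : p % 2 = 1) : ‖x‖ = ‖2 * x‖ := by
  have h2 : ((2:ℕ):ℚ_[p]) = (2:ℚ_[p]) := by push_cast; ring
  have h1 := hp.out.one_lt
  rw [← h2, numul (by omega) (by omega)]

lemma icc_eq : Finset.range p = insert 0 (Finset.Icc 1 (p-1)) := by
  have h1 : 1 ≤ p := hp.out.one_lt.le
  ext t; simp only [Finset.mem_range, Finset.mem_insert, Finset.mem_Icc]; omega

lemma sps_cast (r : ℕ) (hr : 1 ≤ r) :
    ((Sps r (p-1) : ℤ) : ℚ) = ∑ k ∈ range p, (k:ℚ)^r := by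
  rw [icc_eq, Finset.sum_insert (by simp), Sps]
  push_cast
  rw [zero_pow (by omega), zero_add]

lemma faulhaberK (r : ℕ) (hr : 1 ≤ r) :
    ((r:ℚ_[p]) + 1) * ((Sps r (p-1) : ℤ) : ℚ_[p]) =
      ∑ j ∈ range (r+1), ((bernoulli j : ℚ) : ℚ_[p]) * ((r+1).choose j : ℚ_[p]) * (p:ℚ_[p]) ^ (r+1-j) := by
  have h2 : ((r:ℚ)+1) * ((Sps r (p-1):ℤ):ℚ)
      = ∑ j ∈ range (r+1), bernoulli j * ((r+1).choose j : ℚ) * (p:ℚ)^(r+1-j) := by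
    rw [sps_cast r hr, _root_.sum_range_pow p r, Finset.mul_sum]
    refine Finset.sum_congr rfl fun j hj => ?_
    have : ((r:ℚ) + 1) ≠ 0 := by positivity
    field_simp
  have h3 := congrArg (fun q : ℚ => (q : ℚ_[p])) h2
  push_cast at h3
  exact h3

lemma sps_dvd {n : ℕ} (h1 : 1 ≤ n) (h2 : n < p - 1) : (p:ℤ) ∣ Sps n (p-1) := by
  haveI : NeZero p := ⟨hp.out.pos.ne'⟩
  have key : ((Sps n (p-1) : ℤ) : ZMod p) = 0 := by
    have hsum : ((Sps n (p-1) : ℤ) : ZMod p) = ∑ t ∈ range p, ((t : ZMod p))^n := by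
      rw [Sps, icc_eq, Finset.sum_insert (by simp)]
      push_cast
      rw [zero_pow (by omega), zero_add]
    rw [hsum]
    have hbij : ∑ t ∈ range p, ((t : ZMod p))^n = ∑ x : ZMod p, x^n := by
      refine Finset.sum_nbij' (fun t => (t : ZMod p)) (fun x => x.val) ?_ ?_ ?_ ?_ ?_
      · intro a _; exact Finset.mem_univ _
      · intro x _; exact Finset.mem_range.2 (ZMod.val_lt x)
      · intro a ha; exact ZMod.val_cast_of_lt (Finset.mem_range.1 ha)
      · intro x _; exact ZMod.natCast_rightInverse x
      · intro a _; rfl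
    rw [hbij]
    have hcard : Fintype.card (ZMod p) = p := ZMod.card p
    exact FiniteField.sum_pow_lt_card_sub_one (K := ZMod p) n (by rw [hcard]; omega)
  exact_mod_cast (ZMod.intCast_zmod_eq_zero_iff_dvd _ p).1 key

lemma sps_norm {n : ℕ} (h1 : 1 ≤ n) (h2 : n < p - 1) :
    ‖((Sps n (p-1) : ℤ) : ℚ_[p])‖ ≤ (p:ℝ) ^ (-1:ℤ) := by
  obtain ⟨c, hc⟩ := sps_dvd h1 h2
  rw [hc]
  push_cast
  rw [norm_mul, Padic.norm_p, zpow_neg, zpow_one]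
  have h3 := Padic.norm_int_le_one (p := p) c
  have h4 : (0:ℝ) ≤ (p:ℝ)⁻¹ := by have := ppos (p := p); positivity
  calc (p:ℝ)⁻¹ * ‖((c:ℤ):ℚ_[p])‖ ≤ (p:ℝ)⁻¹ * 1 := mul_le_mul_of_nonneg_left h3 h4
    _ = (p:ℝ)⁻¹ := mul_one _

lemma bern_norm (n : ℕ) (hn : n ≤ p - 2) : ‖((bernoulli n : ℚ) : ℚ_[p])‖ ≤ 1 := by
  induction n using Nat.strong_induction_on with
  | _ n IH =>
  match n, hn with
  | 0, _ => simp [bernoulli_zero]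
  | 1, hn =>
    have hp3 : 3 ≤ p := by omega
    have h2 : ‖((2:ℕ) : ℚ_[p])‖ = 1 := bunit (by norm_num) (by omega)
    rw [bernoulli_one]
    push_cast
    rw [norm_div, norm_neg, norm_one]
    rw [show ((2:ℚ_[p])) = ((2:ℕ):ℚ_[p]) by push_cast; ring, h2]
    norm_num
  | (m+2), hn =>
    set n := m + 2 with hn2
    have hr : 1 ≤ n := by omega
    have key := faulhaberK (p := p) n hr
    rw [Finset.sum_range_succ] at key
    have hch : ((n+1).choose n : ℚ_[p]) = ((n:ℚ_[p])+1) := by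
      rw [Nat.choose_succ_self_right]; push_cast; ring
    have hpow : (p:ℚ_[p]) ^ (n + 1 - n) = (p:ℚ_[p]) := by
      rw [show n + 1 - n = 1 by omega, pow_one]
    rw [hch, hpow] at key
    have hmain : ((bernoulli n : ℚ) : ℚ_[p]) * (((n:ℚ_[p])+1) * (p:ℚ_[p])) =
        ((n:ℚ_[p]) + 1) * ((Sps n (p-1) : ℤ) : ℚ_[p]) -
        ∑ j ∈ range n, ((bernoulli j : ℚ) : ℚ_[p]) * ((n+1).choose j : ℚ_[p]) * (p:ℚ_[p]) ^ (n+1-j) := by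
      rw [key]; ring
    have hS : ‖((n:ℚ_[p]) + 1) * ((Sps n (p-1) : ℤ) : ℚ_[p])‖ ≤ (p:ℝ)^(-1:ℤ) := by
      apply bmul1
      · rw [show ((n:ℚ_[p])+1) = ((n+1:ℕ):ℚ_[p]) by push_cast; ring]
        exact le_of_eq (bunit (by omega) (by omega))
      · exact sps_norm hr (by omega)
      · have := ppos (p := p); positivity
    have htail : ‖∑ j ∈ range n, ((bernoulli j : ℚ) : ℚ_[p]) * ((n+1).choose j : ℚ_[p]) * (p:ℚ_[p]) ^ (n+1-j)‖
        ≤ (p:ℝ)^(-1:ℤ) := by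
      apply IsUltrametricDist.norm_sum_le_of_forall_le_of_nonneg
        (by have := ppos (p := p); positivity)
      intro j hj
      have hj' := Finset.mem_range.1 hj
      apply bmul1 (hc := by have := ppos (p := p); positivity)
      · exact bmul1 (IH j hj' (by omega)) (bnat _) zero_le_one
      · rw [Padic.norm_p_pow]
        apply pmono; omega
    have hfin : ‖((bernoulli n : ℚ) : ℚ_[p]) * (((n:ℚ_[p])+1) * (p:ℚ_[p]))‖ ≤ (p:ℝ)^(-1:ℤ) := by
      rw [hmain]; exact bsub hS htail
    rw [norm_mul, norm_mul] at hfin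
    rw [show ((n:ℚ_[p])+1) = ((n+1:ℕ):ℚ_[p]) by push_cast; ring] at hfin
    rw [bunit (n := n+1) (by omega) (by omega), one_mul, Padic.norm_p] at hfin
    have hppos : (0:ℝ) < (p:ℝ)⁻¹ := by have := ppos (p := p); positivity
    have hz : (p:ℝ)^(-1:ℤ) = (p:ℝ)⁻¹ := by rw [zpow_neg, zpow_one]
    rw [hz] at hfin
    calc ‖((bernoulli n : ℚ) : ℚ_[p])‖ = ‖((bernoulli n : ℚ) : ℚ_[p])‖ * (p:ℝ)⁻¹ * (p:ℝ) := by
          rw [mul_assoc, inv_mul_cancel₀ (ppos (p := p)).ne', mul_one]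
      _ ≤ (p:ℝ)⁻¹ * (p:ℝ) := mul_le_mul_of_nonneg_right hfin (by positivity)
      _ = 1 := inv_mul_cancel₀ (ppos (p := p)).ne'

lemma bern_odd_zero {n : ℕ} (h : Odd n) (h3 : 3 ≤ n) : bernoulli n = 0 := by
  rw [bernoulli_eq_bernoulli'_of_ne_one (by omega)]
  exact bernoulli'_eq_zero_of_odd h (by omega)

lemma two_choose (m : ℕ) : 2 * ((m+6).choose (m+4)) = (m+6) * (m+5) := by
  have h1 : (m+6).choose (m+4) = (m+6).choose 2 := by
    rw [show m+4 = (m+6) - 2 by omega, Nat.choose_symm (by omega)]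
  have h2 := Nat.choose_succ_right_eq (m+6) 1
  rw [Nat.choose_one_right] at h2
  norm_num at h2
  omega

lemma trunc_even {k : ℕ} (hk : Even k) (h4 : 4 ≤ k) (h3 : k ≤ p - 3) :
    ‖((Sps k (p-1) : ℤ) : ℚ_[p]) - (p:ℚ_[p]) * ((bernoulli k : ℚ) : ℚ_[p])‖ ≤ (p:ℝ) ^ (-3:ℤ) := by
  obtain ⟨m, rfl⟩ : ∃ m, k = m + 4 := ⟨k - 4, by omega⟩
  obtain ⟨t, ht⟩ := hk
  have key := faulhaberK (p := p) (m+4) (by omega)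
  rw [Finset.sum_range_succ, Finset.sum_range_succ] at key
  have hb3 : ((bernoulli (m+3) : ℚ) : ℚ_[p]) = 0 := by
    rw [bern_odd_zero ⟨t-1, by omega⟩ (by omega)]; simp
  have h2 : ((m:ℚ_[p])+5) * (((Sps (m+4) (p-1) : ℤ) : ℚ_[p]) - (p:ℚ_[p]) * ((bernoulli (m+4) : ℚ) : ℚ_[p])) =
      ∑ j ∈ range (m+3), ((bernoulli j : ℚ) : ℚ_[p]) * ((m+4+1).choose j : ℚ_[p]) * (p:ℚ_[p]) ^ (m+4+1-j) := by
    have hch : ((m+4+1).choose (m+4) : ℚ_[p]) = ((m:ℚ_[p])+5) := by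
      rw [Nat.choose_succ_self_right (m+4)]; push_cast; ring
    rw [hch, show m+4+1-(m+4) = 1 by omega, pow_one] at key
    have hcast : ((m+4:ℕ):ℚ_[p]) + 1 = ((m:ℚ_[p])+5) := by push_cast; ring
    rw [hcast] at key
    linear_combination key + (((m+4+1).choose (m+3) : ℚ_[p]) * (p:ℚ_[p]) ^ (m+4+1-(m+3))) * hb3
  have hnorm : ‖∑ j ∈ range (m+3), ((bernoulli j : ℚ) : ℚ_[p]) * ((m+4+1).choose j : ℚ_[p]) * (p:ℚ_[p]) ^ (m+4+1-j)‖ ≤ (p:ℝ)^(-3:ℤ) := by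
    apply IsUltrametricDist.norm_sum_le_of_forall_le_of_nonneg
      (by have := ppos (p := p); positivity)
    intro j hj
    have hj' := Finset.mem_range.1 hj
    refine bmul1 (bmul1 (bern_norm j (by omega)) (bnat _) zero_le_one) ?_
      (by have := ppos (p := p); positivity)
    rw [Padic.norm_p_pow]
    apply pmono; omega
  have heq : ‖((Sps (m+4) (p-1) : ℤ) : ℚ_[p]) - (p:ℚ_[p]) * ((bernoulli (m+4) : ℚ) : ℚ_[p])‖
      = ‖((m:ℚ_[p])+5) * (((Sps (m+4) (p-1) : ℤ) : ℚ_[p]) - (p:ℚ_[p]) * ((bernoulli (m+4) : ℚ) : ℚ_[p]))‖ := by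
    rw [show ((m:ℚ_[p])+5) = ((m+5:ℕ):ℚ_[p]) by push_cast; ring, numul (by omega) (by omega)]
  rw [heq, h2]
  exact hnorm

lemma trunc_odd {r : ℕ} (hr : Odd r) (h5 : 5 ≤ r) (h4 : r ≤ p - 4) :
    ‖2 * ((Sps r (p-1) : ℤ) : ℚ_[p]) - (r:ℚ_[p]) * ((bernoulli (r-1) : ℚ) : ℚ_[p]) * (p:ℚ_[p])^2‖
      ≤ (p:ℝ) ^ (-4:ℤ) := by
  obtain ⟨m, rfl⟩ : ∃ m, r = m + 5 := ⟨r - 5, by omega⟩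
  obtain ⟨t, ht⟩ := hr
  rw [show m+5-1 = m+4 by omega]
  have key := faulhaberK (p := p) (m+5) (by omega)
  rw [Finset.sum_range_succ, Finset.sum_range_succ, Finset.sum_range_succ] at key
  have hb3 : ((bernoulli (m+3) : ℚ) : ℚ_[p]) = 0 := by
    rw [bern_odd_zero ⟨t-1, by omega⟩ (by omega)]; simp
  have hb5 : ((bernoulli (m+5) : ℚ) : ℚ_[p]) = 0 := by
    rw [bern_odd_zero ⟨t, by omega⟩ (by omega)]; simp
  have hcc : (2:ℚ_[p]) * ((m+5+1).choose (m+4) : ℚ_[p]) = ((m:ℚ_[p])+6) * ((m:ℚ_[p])+5) := by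
    have h6 : (m+5+1) = (m+6) := by omega
    rw [h6]
    have := congrArg (fun n : ℕ => (n : ℚ_[p])) (two_choose m)
    push_cast at this
    linear_combination this
  have h2 : ((m:ℚ_[p])+6) * (2 * ((Sps (m+5) (p-1) : ℤ) : ℚ_[p])
        - ((m+5:ℕ):ℚ_[p]) * ((bernoulli (m+4) : ℚ) : ℚ_[p]) * (p:ℚ_[p])^2) =
      ∑ j ∈ range (m+3), 2 * (((bernoulli j : ℚ) : ℚ_[p]) * ((m+5+1).choose j : ℚ_[p]) * (p:ℚ_[p]) ^ (m+5+1-j)) := by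
    rw [show m+5+1-(m+5) = 1 by omega, show m+5+1-(m+4) = 2 by omega,
        show m+5+1-(m+3) = 3 by omega] at key
    have hcast : ((m+5:ℕ):ℚ_[p]) + 1 = ((m:ℚ_[p])+6) := by push_cast; ring
    have hcast2 : ((m+5:ℕ):ℚ_[p]) = ((m:ℚ_[p])+5) := by push_cast; ring
    rw [hcast] at key
    rw [hcast2]
    rw [← Finset.mul_sum]
    linear_combination (2:ℚ_[p]) * key
      + (((bernoulli (m+4) : ℚ) : ℚ_[p]) * (p:ℚ_[p])^2) * hcc
      + (2 * ((m+5+1).choose (m+3) : ℚ_[p]) * (p:ℚ_[p])^3) * hb3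
      + (2 * ((m+5+1).choose (m+5) : ℚ_[p]) * (p:ℚ_[p])) * hb5
  have hnorm : ‖∑ j ∈ range (m+3), 2 * (((bernoulli j : ℚ) : ℚ_[p]) * ((m+5+1).choose j : ℚ_[p]) * (p:ℚ_[p]) ^ (m+5+1-j))‖
      ≤ (p:ℝ)^(-4:ℤ) := by
    apply IsUltrametricDist.norm_sum_le_of_forall_le_of_nonneg
      (by have := ppos (p := p); positivity)
    intro j hj
    have hj' := Finset.mem_range.1 hj
    have h2n : ‖(2:ℚ_[p])‖ ≤ 1 := by
      have := bnat (p := p) 2; push_cast at this; exact this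
    refine bmul1 h2n ?_ (by have := ppos (p := p); positivity)
    refine bmul1 (bmul1 (bern_norm j (by omega)) (bnat _) zero_le_one) ?_
      (by have := ppos (p := p); positivity)
    rw [Padic.norm_p_pow]
    apply pmono; omega
  have heq : ‖2 * ((Sps (m+5) (p-1) : ℤ) : ℚ_[p]) - ((m+5:ℕ):ℚ_[p]) * ((bernoulli (m+4) : ℚ) : ℚ_[p]) * (p:ℚ_[p])^2‖
      = ‖((m:ℚ_[p])+6) * (2 * ((Sps (m+5) (p-1) : ℤ) : ℚ_[p]) - ((m+5:ℕ):ℚ_[p]) * ((bernoulli (m+4) : ℚ) : ℚ_[p]) * (p:ℚ_[p])^2)‖ := by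
    rw [show ((m:ℚ_[p])+6) = ((m+6:ℕ):ℚ_[p]) by push_cast; ring, numul (by omega) (by omega)]
  rw [heq, h2]
  exact hnorm

lemma choose_norm {k : ℕ} (h0 : k ≠ 0) (h1 : k < p) :
    ‖(p.choose k : ℚ_[p])‖ ≤ (p:ℝ) ^ (-1:ℤ) := by
  obtain ⟨c, hc⟩ := hp.out.dvd_choose_self h0 h1
  rw [hc]
  push_cast
  rw [norm_mul, Padic.norm_p, zpow_neg, zpow_one]
  have h3 := bnat (p := p) c
  have h4 : (0:ℝ) ≤ (p:ℝ)⁻¹ := by have := ppos (p := p); positivity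
  calc (p:ℝ)⁻¹ * ‖((c:ℕ):ℚ_[p])‖ ≤ (p:ℝ)⁻¹ * 1 := mul_le_mul_of_nonneg_left h3 h4
    _ = (p:ℝ)⁻¹ := mul_one _

lemma main_re {k : ℕ} (hodd : p % 2 = 1) (hp11 : 11 ≤ p) (hk : Even k) (h4 : 4 ≤ k) (h5 : k ≤ p - 5) :
    ‖(p.choose k : ℚ_[p]) * ((Sps (p-k) (p-1) : ℤ) : ℚ_[p]) * ((Sps k (p-1) : ℤ) : ℚ_[p])
      - (p:ℚ_[p])^3/2 * ((p:ℚ_[p]) - (k:ℚ_[p])) * (p.choose k : ℚ_[p]) *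
        ((bernoulli k : ℚ) : ℚ_[p]) * ((bernoulli (p-k-1) : ℚ) : ℚ_[p])‖ ≤ (p:ℝ) ^ (-6:ℤ) := by
  obtain ⟨t, ht⟩ := hk
  obtain ⟨s, hs⟩ : ∃ s, p = 2*s+1 := ⟨p/2, by omega⟩
  have hoddpk : Odd (p - k) := ⟨s - t, by omega⟩
  set S' := ((Sps (p-k) (p-1) : ℤ) : ℚ_[p]) with hS'
  set S := ((Sps k (p-1) : ℤ) : ℚ_[p]) with hS
  set B := ((bernoulli k : ℚ) : ℚ_[p]) with hB
  set B' := ((bernoulli (p-k-1) : ℚ) : ℚ_[p]) with hB'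
  set C := (p.choose k : ℚ_[p]) with hC
  set P := (p : ℚ_[p]) with hP
  have hu : ‖2 * S' - ((p-k:ℕ):ℚ_[p]) * B' * P^2‖ ≤ (p:ℝ)^(-4:ℤ) := by
    have := trunc_odd (p := p) hoddpk (by omega) (by omega)
    rw [show p-k-1 = (p-k)-1 by omega] at this
    exact this
  have hv : ‖S - P * B‖ ≤ (p:ℝ)^(-3:ℤ) := trunc_even ⟨t, ht⟩ h4 (by omega)
  have hSnorm : ‖S‖ ≤ (p:ℝ)^(-1:ℤ) := sps_norm (by omega) (by omega)
  have hCnorm : ‖C‖ ≤ (p:ℝ)^(-1:ℤ) := choose_norm (by omega) (by omega)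
  have hw : ‖((p-k:ℕ):ℚ_[p]) * B' * P^2‖ ≤ (p:ℝ)^(-2:ℤ) := by
    refine bmul1 (bmul1 (bnat _) (bern_norm _ (by omega)) zero_le_one) ?_ ?_
    · rw [show P^2 = P^(2:ℕ) by norm_num, hP, Padic.norm_p_pow]
      norm_num
    · have := ppos (p := p); positivity
  have hsub : ((p - k:ℕ):ℚ_[p]) = P - (k:ℚ_[p]) := by
    rw [Nat.cast_sub (by omega)]
  have key : 2 * (C * S' * S) - 2 * (P^3/2 * (P - (k:ℚ_[p])) * C * B * B') =
      C * ((2 * S' - ((p-k:ℕ):ℚ_[p]) * B' * P^2) * S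
         + ((p-k:ℕ):ℚ_[p]) * B' * P^2 * (S - P * B)) := by
    rw [hsub]; ring
  have hbound : ‖C * ((2 * S' - ((p-k:ℕ):ℚ_[p]) * B' * P^2) * S
      + ((p-k:ℕ):ℚ_[p]) * B' * P^2 * (S - P * B))‖ ≤ (p:ℝ)^(-6:ℤ) := by
    have h1 : ‖(2 * S' - ((p-k:ℕ):ℚ_[p]) * B' * P^2) * S‖ ≤ (p:ℝ)^(-(4+1):ℤ) := bmul hu hSnorm
    have h2 : ‖((p-k:ℕ):ℚ_[p]) * B' * P^2 * (S - P * B)‖ ≤ (p:ℝ)^(-(2+3):ℤ) := bmul hw hv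
    have h3 := badd (p := p) h1 h2
    have := bmul hCnorm h3
    norm_num at this ⊢
    exact this
  rw [norm2 _ hodd, show (2:ℚ_[p]) * (C * S' * S - P^3/2 * (P - (k:ℚ_[p])) * C * B * B')
      = 2 * (C * S' * S) - 2 * (P^3/2 * (P - (k:ℚ_[p])) * C * B * B') by ring, key]
  exact hbound

lemma main_im {k : ℕ} (hodd : p % 2 = 1) (hp11 : 11 ≤ p) (hk : Even k) (h4 : 4 ≤ k) (h5 : k ≤ p - 5) :
    ‖(p.choose (k+1) : ℚ_[p]) * ((Sps (p-k-1) (p-1) : ℤ) : ℚ_[p]) * ((Sps (k+1) (p-1) : ℤ) : ℚ_[p])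
      - (p:ℚ_[p])^3/2 * ((p:ℚ_[p]) - (k:ℚ_[p])) * (p.choose k : ℚ_[p]) *
        ((bernoulli k : ℚ) : ℚ_[p]) * ((bernoulli (p-k-1) : ℚ) : ℚ_[p])‖ ≤ (p:ℝ) ^ (-6:ℤ) := by
  obtain ⟨t, ht⟩ := hk
  obtain ⟨s, hs⟩ : ∃ s, p = 2*s+1 := ⟨p/2, by omega⟩
  set A := ((Sps (p-k-1) (p-1) : ℤ) : ℚ_[p]) with hA
  set Sk1 := ((Sps (k+1) (p-1) : ℤ) : ℚ_[p]) with hSk1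
  set B := ((bernoulli k : ℚ) : ℚ_[p]) with hB
  set B' := ((bernoulli (p-k-1) : ℚ) : ℚ_[p]) with hB'
  set C := (p.choose k : ℚ_[p]) with hC
  set C1 := (p.choose (k+1) : ℚ_[p]) with hC1
  set P := (p : ℚ_[p]) with hP
  have hbd : ‖2 * Sk1 - ((k+1:ℕ):ℚ_[p]) * B * P^2‖ ≤ (p:ℝ)^(-4:ℤ) := by
    have := trunc_odd (p := p) (r := k+1) ⟨t, by omega⟩ (by omega) (by omega)
    rw [show k+1-1 = k by omega] at this
    exact this
  have hac : ‖A - P * B'‖ ≤ (p:ℝ)^(-3:ℤ) := trunc_even ⟨s - t, by omega⟩ (by omega) (by omega)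
  have hAnorm : ‖A‖ ≤ (p:ℝ)^(-1:ℤ) := sps_norm (by omega) (by omega)
  have hC1norm : ‖C1‖ ≤ (p:ℝ)^(-1:ℤ) := choose_norm (by omega) (by omega)
  have hd : ‖((k+1:ℕ):ℚ_[p]) * B * P^2‖ ≤ (p:ℝ)^(-2:ℤ) := by
    refine bmul1 (bmul1 (bnat _) (bern_norm _ (by omega)) zero_le_one) ?_ ?_
    · rw [show P^2 = P^(2:ℕ) by norm_num, hP, Padic.norm_p_pow]
      norm_num
    · have := ppos (p := p); positivity
  have hid : ((k+1:ℕ):ℚ_[p]) * C1 = (P - (k:ℚ_[p])) * C := by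
    have h0 := Nat.choose_succ_right_eq p k
    have h1 := congrArg (fun n : ℕ => (n : ℚ_[p])) h0
    push_cast at h1
    rw [hC1, hC, hP]
    push_cast
    rw [show (p:ℚ_[p]) - (k:ℚ_[p]) = ((p - k : ℕ):ℚ_[p]) by rw [Nat.cast_sub (by omega)]]
    linear_combination h1
  have key : 2 * (C1 * A * Sk1) - 2 * (P^3/2 * (P - (k:ℚ_[p])) * C * B * B') =
      C1 * (A * (2 * Sk1 - ((k+1:ℕ):ℚ_[p]) * B * P^2)
         + ((k+1:ℕ):ℚ_[p]) * B * P^2 * (A - P * B')) := by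
    linear_combination (B * B' * P^3) * hid
  have hbound : ‖C1 * (A * (2 * Sk1 - ((k+1:ℕ):ℚ_[p]) * B * P^2)
      + ((k+1:ℕ):ℚ_[p]) * B * P^2 * (A - P * B'))‖ ≤ (p:ℝ)^(-6:ℤ) := by
    have h1 : ‖A * (2 * Sk1 - ((k+1:ℕ):ℚ_[p]) * B * P^2)‖ ≤ (p:ℝ)^(-(1+4):ℤ) := bmul hAnorm hbd
    have h2 : ‖((k+1:ℕ):ℚ_[p]) * B * P^2 * (A - P * B')‖ ≤ (p:ℝ)^(-(2+3):ℤ) := bmul hd hac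
    have h3 := badd (p := p) h1 h2
    have := bmul hC1norm h3
    norm_num at this ⊢
    exact this
  rw [norm2 _ hodd, show (2:ℚ_[p]) * (C1 * A * Sk1 - P^3/2 * (P - (k:ℚ_[p])) * C * B * B')
      = 2 * (C1 * A * Sk1) - 2 * (P^3/2 * (P - (k:ℚ_[p])) * C * B * B') by ring, key]
  exact hbound

lemma hIg2 : Ig ^ 2 = (-1 : GaussianInt) := by
  rw [pow_two]
  ext <;> simp [Ig, Zsqrtd.re_mul, Zsqrtd.im_mul]

lemma Ak_re {q t : ℕ} :
    (Ak q (t+t)).re = (-1)^t * (q.choose (t+t) * Sps (q-(t+t)) (q-1) * Sps (t+t) (q-1)) := by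
  generalize hg : ((-1:ℤ))^t = n
  have h1 : Ig ^ (t+t) = ((n : ℤ) : GaussianInt) := by
    rw [← hg, show t+t = 2*t by ring, pow_mul, hIg2]; push_cast; ring
  have h2 : Ig ^ (t+t+1) = ((n : ℤ) : GaussianInt) * Ig := by
    rw [pow_succ, h1]
  rw [Ak, h1, h2]
  simp [Zsqrtd.re_add, Zsqrtd.re_mul, Zsqrtd.im_mul, Ig, Zsqrtd.re_intCast, Zsqrtd.im_intCast]
  ring

lemma Ak_im {q t : ℕ} :
    (Ak q (t+t)).im = (-1)^t * (q.choose (t+t+1) * Sps (q-(t+t)-1) (q-1) * Sps (t+t+1) (q-1)) := by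
  generalize hg : ((-1:ℤ))^t = n
  have h1 : Ig ^ (t+t) = ((n : ℤ) : GaussianInt) := by
    rw [← hg, show t+t = 2*t by ring, pow_mul, hIg2]; push_cast; ring
  have h2 : Ig ^ (t+t+1) = ((n : ℤ) : GaussianInt) * Ig := by
    rw [pow_succ, h1]
  rw [Ak, h1, h2]
  simp [Zsqrtd.im_add, Zsqrtd.re_mul, Zsqrtd.im_mul, Ig, Zsqrtd.re_intCast, Zsqrtd.im_intCast]
  ring

lemma part1_re {k : ℕ} (hodd : p % 2 = 1) (hp11 : 11 ≤ p) (hk : Even k) (h4 : 4 ≤ k)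
    (h5 : k ≤ p - 5) : ‖(((Ak p k).re : ℚ_[p]) - Tgt p k)‖ ≤ (p:ℝ) ^ (-(6:ℤ)) := by
  obtain ⟨t, rfl⟩ := hk
  have hre : (((Ak p (t+t)).re : ℤ) : ℚ_[p])
      = (-1:ℚ_[p])^t * ((p.choose (t+t) : ℚ_[p]) * ((Sps (p-(t+t)) (p-1) : ℤ) : ℚ_[p]) * ((Sps (t+t) (p-1) : ℤ) : ℚ_[p])) := by
    rw [Ak_re]; push_cast; ring
  have hdiv : (t+t)/2 = t := by omega
  have heq : (((Ak p (t+t)).re : ℤ) : ℚ_[p]) - Tgt p (t+t)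
      = (-1:ℚ_[p])^t * ((p.choose (t+t) : ℚ_[p]) * ((Sps (p-(t+t)) (p-1) : ℤ) : ℚ_[p]) * ((Sps (t+t) (p-1) : ℤ) : ℚ_[p])
        - (p:ℚ_[p])^3/2 * ((p:ℚ_[p]) - ((t+t:ℕ):ℚ_[p])) * (p.choose (t+t) : ℚ_[p]) *
          ((bernoulli (t+t) : ℚ) : ℚ_[p]) * ((bernoulli (p-(t+t)-1) : ℚ) : ℚ_[p])) := by
    rw [hre, Tgt, hdiv]; ring
  rw [heq, norm_mul, norm_pow, norm_neg, norm_one, one_pow, one_mul]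
  exact main_re hodd hp11 ⟨t, rfl⟩ h4 h5

lemma part1_im {k : ℕ} (hodd : p % 2 = 1) (hp11 : 11 ≤ p) (hk : Even k) (h4 : 4 ≤ k)
    (h5 : k ≤ p - 5) : ‖(((Ak p k).im : ℚ_[p]) - Tgt p k)‖ ≤ (p:ℝ) ^ (-(6:ℤ)) := by
  obtain ⟨t, rfl⟩ := hk
  have him : (((Ak p (t+t)).im : ℤ) : ℚ_[p])
      = (-1:ℚ_[p])^t * ((p.choose (t+t+1) : ℚ_[p]) * ((Sps (p-(t+t)-1) (p-1) : ℤ) : ℚ_[p]) * ((Sps (t+t+1) (p-1) : ℤ) : ℚ_[p])) := by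
    rw [Ak_im]; push_cast; ring
  have hdiv : (t+t)/2 = t := by omega
  have heq : (((Ak p (t+t)).im : ℤ) : ℚ_[p]) - Tgt p (t+t)
      = (-1:ℚ_[p])^t * ((p.choose (t+t+1) : ℚ_[p]) * ((Sps (p-(t+t)-1) (p-1) : ℤ) : ℚ_[p]) * ((Sps (t+t+1) (p-1) : ℤ) : ℚ_[p])
        - (p:ℚ_[p])^3/2 * ((p:ℚ_[p]) - ((t+t:ℕ):ℚ_[p])) * (p.choose (t+t) : ℚ_[p]) *
          ((bernoulli (t+t) : ℚ) : ℚ_[p]) * ((bernoulli (p-(t+t)-1) : ℚ) : ℚ_[p])) := by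
    rw [him, Tgt, hdiv]; ring
  rw [heq, norm_mul, norm_pow, norm_neg, norm_one, one_pow, one_mul]
  exact main_im hodd hp11 ⟨t, rfl⟩ h4 h5

lemma Tsum {k : ℕ} (h3 : p % 4 = 3) (hp11 : 11 ≤ p) (hk : Even k) (h4 : 4 ≤ k)
    (h5 : k ≤ p - 5) : Tgt p (p-1-k) + Tgt p k = 0 := by
  obtain ⟨t, rfl⟩ := hk
  obtain ⟨u, hu⟩ : ∃ u, p = 4*u+3 := ⟨p/4, by omega⟩
  rw [Tgt, Tgt]
  have e1 : ((p-1-(t+t):ℕ):ℚ_[p]) = (p:ℚ_[p]) - ((t+t:ℕ):ℚ_[p]) - 1 := by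
    have : (p-1-(t+t)) + ((t+t)+1) = p := by omega
    have hc := congrArg (fun n : ℕ => (n : ℚ_[p])) this
    push_cast at hc
    push_cast
    linear_combination hc
  have e2 : p.choose (p-1-(t+t)) = p.choose ((t+t)+1) := by
    rw [show p-1-(t+t) = p - ((t+t)+1) by omega, Nat.choose_symm (by omega)]
  have e3 : p - (p-1-(t+t)) - 1 = t+t := by omega
  have e4 : p - 1 - (t+t) = p - (t+t) - 1 := by omega
  have e5 : (p-1-(t+t))/2 = 2*u+1-t := by omega
  have e6 : (t+t)/2 = t := by omega
  have e7 : (-1:ℚ_[p])^(2*u+1-t) = -(-1:ℚ_[p])^t := by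
    rcases Nat.even_or_odd t with he | ho
    · obtain ⟨v, hv⟩ := he
      have h1 : Even t := ⟨v, hv⟩
      have h2 : Odd (2*u+1-t) := ⟨u - v, by omega⟩
      rw [(h1.neg_one_pow : (-1:ℚ_[p])^t = 1), (h2.neg_one_pow : (-1:ℚ_[p])^(2*u+1-t) = -1)]
    · obtain ⟨v, hv⟩ := ho
      have h1 : Odd t := ⟨v, hv⟩
      have h2 : Even (2*u+1-t) := ⟨u - v, by omega⟩
      rw [(h1.neg_one_pow : (-1:ℚ_[p])^t = -1), (h2.neg_one_pow : (-1:ℚ_[p])^(2*u+1-t) = 1)]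
      norm_num
  have hid : (((t+t)+1:ℕ):ℚ_[p]) * (p.choose ((t+t)+1) : ℚ_[p])
      = ((p:ℚ_[p]) - ((t+t:ℕ):ℚ_[p])) * (p.choose (t+t) : ℚ_[p]) := by
    have h0 := Nat.choose_succ_right_eq p (t+t)
    have h1 := congrArg (fun n : ℕ => (n : ℚ_[p])) h0
    push_cast at h1
    rw [show (p:ℚ_[p]) - ((t+t:ℕ):ℚ_[p]) = ((p - (t+t) : ℕ):ℚ_[p]) by rw [Nat.cast_sub (by omega)]]
    push_cast
    linear_combination h1
  rw [e1, e2, e3, e5, e6, e7, e4]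
  have hcast : (((t+t)+1:ℕ):ℚ_[p]) = ((t+t:ℕ):ℚ_[p]) + 1 := by push_cast; ring
  rw [hcast] at hid
  have hk2 : ((t+t:ℕ):ℚ_[p]) = ((t:ℚ_[p])+(t:ℚ_[p])) := by push_cast; ring
  rw [hk2] at hid ⊢
  linear_combination (-((p:ℚ_[p])^3/2 * (-1:ℚ_[p])^t *
    ((bernoulli (p-(t+t)-1) : ℚ) : ℚ_[p]) * ((bernoulli (t+t) : ℚ) : ℚ_[p]))) * hid

lemma pair_mem {k : ℕ} (h3 : p % 4 = 3) (hp11 : 11 ≤ p) (hk : Even k) (h4 : 4 ≤ k)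
    (h5 : k ≤ p - 5) : Even (p-1-k) ∧ 4 ≤ p-1-k ∧ p-1-k ≤ p - 5 := by
  obtain ⟨t, rfl⟩ := hk
  obtain ⟨u, hu⟩ : ∃ u, p = 4*u+3 := ⟨p/4, by omega⟩
  exact ⟨⟨2*u+1-t, by omega⟩, by omega, by omega⟩

lemma pair_re {k : ℕ} (h3 : p % 4 = 3) (hp11 : 11 ≤ p) (hk : Even k) (h4 : 4 ≤ k)
    (h5 : k ≤ p - 5) : ‖(((Ak p (p-1-k) + Ak p k).re : ℚ_[p]))‖ ≤ (p:ℝ) ^ (-(6:ℤ)) := by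
  obtain ⟨hk', h4', h5'⟩ := pair_mem h3 hp11 hk h4 h5
  have hodd : p % 2 = 1 := by omega
  have b1 := part1_re (p := p) hodd hp11 hk' h4' h5'
  have b2 := part1_re (p := p) hodd hp11 hk h4 h5
  have hT := Tsum (p := p) h3 hp11 hk h4 h5
  have he : (((Ak p (p-1-k) + Ak p k).re : ℤ) : ℚ_[p])
      = (((Ak p (p-1-k)).re : ℤ) : ℚ_[p]) + (((Ak p k).re : ℤ) : ℚ_[p]) := by
    rw [Zsqrtd.re_add]; push_cast; ring
  rw [he, show (((Ak p (p-1-k)).re : ℤ) : ℚ_[p]) + (((Ak p k).re : ℤ) : ℚ_[p])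
      = ((((Ak p (p-1-k)).re : ℤ) : ℚ_[p]) - Tgt p (p-1-k)) + ((((Ak p k).re : ℤ) : ℚ_[p]) - Tgt p k)
      by linear_combination hT]
  exact badd b1 b2

lemma pair_im {k : ℕ} (h3 : p % 4 = 3) (hp11 : 11 ≤ p) (hk : Even k) (h4 : 4 ≤ k)
    (h5 : k ≤ p - 5) : ‖(((Ak p (p-1-k) + Ak p k).im : ℚ_[p]))‖ ≤ (p:ℝ) ^ (-(6:ℤ)) := by
  obtain ⟨hk', h4', h5'⟩ := pair_mem h3 hp11 hk h4 h5
  have hodd : p % 2 = 1 := by omega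
  have b1 := part1_im (p := p) hodd hp11 hk' h4' h5'
  have b2 := part1_im (p := p) hodd hp11 hk h4 h5
  have hT := Tsum (p := p) h3 hp11 hk h4 h5
  have he : (((Ak p (p-1-k) + Ak p k).im : ℤ) : ℚ_[p])
      = (((Ak p (p-1-k)).im : ℤ) : ℚ_[p]) + (((Ak p k).im : ℤ) : ℚ_[p]) := by
    rw [Zsqrtd.im_add]; push_cast; ring
  rw [he, show (((Ak p (p-1-k)).im : ℤ) : ℚ_[p]) + (((Ak p k).im : ℤ) : ℚ_[p])
      = ((((Ak p (p-1-k)).im : ℤ) : ℚ_[p]) - Tgt p (p-1-k)) + ((((Ak p k).im : ℤ) : ℚ_[p]) - Tgt p k)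
      by linear_combination hT]
  exact badd b1 b2

end S19

theorem stmt19 (p : ℕ) [Fact p.Prime] (hp11 : 11 ≤ p) (h3 : p % 4 = 3) :
    (∀ k : ℕ, Even k → 4 ≤ k → k ≤ p - 5 →
      (‖(((Ak p k).re : ℚ_[p]) -
          (p : ℚ_[p]) ^ 3 / 2 * ((p : ℚ_[p]) - (k : ℚ_[p])) * (p.choose k : ℚ_[p]) *
            (-1 : ℚ_[p]) ^ (k / 2) * ((bernoulli k : ℚ) : ℚ_[p]) *
            ((bernoulli (p - k - 1) : ℚ) : ℚ_[p]))‖ ≤ (p : ℝ) ^ (-(6 : ℤ)) ∧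
        ‖(((Ak p k).im : ℚ_[p]) -
          (p : ℚ_[p]) ^ 3 / 2 * ((p : ℚ_[p]) - (k : ℚ_[p])) * (p.choose k : ℚ_[p]) *
            (-1 : ℚ_[p]) ^ (k / 2) * ((bernoulli k : ℚ) : ℚ_[p]) *
            ((bernoulli (p - k - 1) : ℚ) : ℚ_[p]))‖ ≤ (p : ℝ) ^ (-(6 : ℤ))) ∧
      (‖(((Ak p (p - 1 - k) + Ak p k).re : ℚ_[p]))‖ ≤ (p : ℝ) ^ (-(6 : ℤ)) ∧
        ‖(((Ak p (p - 1 - k) + Ak p k).im : ℚ_[p]))‖ ≤ (p : ℝ) ^ (-(6 : ℤ)))) ∧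
    (‖(((∑ k ∈ (Finset.Icc 4 (p - 5)).filter Even, Ak p k).re : ℚ_[p]))‖ ≤ (p : ℝ) ^ (-(6 : ℤ)) ∧
      ‖(((∑ k ∈ (Finset.Icc 4 (p - 5)).filter Even, Ak p k).im : ℚ_[p]))‖ ≤ (p : ℝ) ^ (-(6 : ℤ))) := by
  have hodd : p % 2 = 1 := by omega
  constructor
  · intro k hk h4 h5
    refine ⟨⟨S19.part1_re hodd hp11 hk h4 h5, S19.part1_im hodd hp11 hk h4 h5⟩,
      S19.pair_re h3 hp11 hk h4 h5, S19.pair_im h3 hp11 hk h4 h5⟩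
  · -- the global sum
    classical
    set F := (Finset.Icc 4 (p - 5)).filter Even with hF
    have hmemF : ∀ k ∈ F, Even k ∧ 4 ≤ k ∧ k ≤ p - 5 := by
      intro k hkF
      rw [hF, Finset.mem_filter, Finset.mem_Icc] at hkF
      exact ⟨hkF.2, hkF.1.1, hkF.1.2⟩
    have hsigma : ∀ k ∈ F, p - 1 - k ∈ F := by
      intro k hkF
      obtain ⟨hk, h4, h5⟩ := hmemF k hkF
      obtain ⟨hk', h4', h5'⟩ := S19.pair_mem h3 hp11 hk h4 h5
      rw [hF, Finset.mem_filter, Finset.mem_Icc]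
      exact ⟨⟨h4', h5'⟩, hk'⟩
    have hinv : ∀ k ∈ F, p - 1 - (p - 1 - k) = k := by
      intro k hkF
      obtain ⟨hk, h4, h5⟩ := hmemF k hkF
      omega
    have hre_sum : ∀ (s : Finset ℕ), (∑ k ∈ s, Ak p k).re = ∑ k ∈ s, (Ak p k).re := by
      intro s
      induction s using Finset.induction_on with
      | empty => simp
      | insert x s hx ih => rw [Finset.sum_insert hx, Finset.sum_insert hx, Zsqrtd.re_add, ih]
    have him_sum : ∀ (s : Finset ℕ), (∑ k ∈ s, Ak p k).im = ∑ k ∈ s, (Ak p k).im := by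
      intro s
      induction s using Finset.induction_on with
      | empty => simp
      | insert x s hx ih => rw [Finset.sum_insert hx, Finset.sum_insert hx, Zsqrtd.im_add, ih]
    have ppos : (0:ℝ) < (p:ℝ) := by positivity
    constructor
    · -- real part
      have hx : (((∑ k ∈ F, Ak p k).re : ℤ) : ℚ_[p]) = ∑ k ∈ F, (((Ak p k).re : ℤ) : ℚ_[p]) := by
        rw [hre_sum]; push_cast; rfl
      rw [hx, S19.norm2 _ hodd, Finset.mul_sum]
      have hflip : ∑ k ∈ F, (((Ak p (p-1-k)).re : ℤ) : ℚ_[p]) = ∑ k ∈ F, (((Ak p k).re : ℤ) : ℚ_[p]) := by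
        refine Finset.sum_nbij' (fun k => p - 1 - k) (fun k => p - 1 - k) hsigma hsigma hinv hinv ?_
        intro k hkF
        rfl
      have h2sum : ∑ k ∈ F, (2 : ℚ_[p]) * (((Ak p k).re : ℤ) : ℚ_[p])
          = ∑ k ∈ F, ((((Ak p (p-1-k)).re : ℤ) : ℚ_[p]) + (((Ak p k).re : ℤ) : ℚ_[p])) := by
        rw [Finset.sum_add_distrib, hflip]
        rw [← Finset.sum_add_distrib]
        refine Finset.sum_congr rfl fun k _ => by ring
      rw [h2sum]
      apply IsUltrametricDist.norm_sum_le_of_forall_le_of_nonneg (by positivity)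
      intro k hkF
      obtain ⟨hk, h4, h5⟩ := hmemF k hkF
      have := S19.pair_re (p := p) h3 hp11 hk h4 h5
      rw [show (((Ak p (p-1-k) + Ak p k).re : ℤ) : ℚ_[p])
          = (((Ak p (p-1-k)).re : ℤ) : ℚ_[p]) + (((Ak p k).re : ℤ) : ℚ_[p]) by
        rw [Zsqrtd.re_add]; push_cast; ring] at this
      exact this
    · -- imaginary part
      have hx : (((∑ k ∈ F, Ak p k).im : ℤ) : ℚ_[p]) = ∑ k ∈ F, (((Ak p k).im : ℤ) : ℚ_[p]) := by
        rw [him_sum]; push_cast; rfl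
      rw [hx, S19.norm2 _ hodd, Finset.mul_sum]
      have hflip : ∑ k ∈ F, (((Ak p (p-1-k)).im : ℤ) : ℚ_[p]) = ∑ k ∈ F, (((Ak p k).im : ℤ) : ℚ_[p]) := by
        refine Finset.sum_nbij' (fun k => p - 1 - k) (fun k => p - 1 - k) hsigma hsigma hinv hinv ?_
        intro k hkF
        rfl
      have h2sum : ∑ k ∈ F, (2 : ℚ_[p]) * (((Ak p k).im : ℤ) : ℚ_[p])
          = ∑ k ∈ F, ((((Ak p (p-1-k)).im : ℤ) : ℚ_[p]) + (((Ak p k).im : ℤ) : ℚ_[p])) := by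
        rw [Finset.sum_add_distrib, hflip]
        rw [← Finset.sum_add_distrib]
        refine Finset.sum_congr rfl fun k _ => by ring
      rw [h2sum]
      apply IsUltrametricDist.norm_sum_le_of_forall_le_of_nonneg (by positivity)
      intro k hkF
      obtain ⟨hk, h4, h5⟩ := hmemF k hkF
      have := S19.pair_im (p := p) h3 hp11 hk h4 h5
      rw [show (((Ak p (p-1-k) + Ak p k).im : ℤ) : ℚ_[p])
          = (((Ak p (p-1-k)).im : ℤ) : ℚ_[p]) + (((Ak p k).im : ℤ) : ℚ_[p]) by
        rw [Zsqrtd.im_add]; push_cast; ring] at this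
      exact this
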